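/- Let ρ be a symmetric probability measure on ℝ which is not the Dirac mass at 0, and let μ be a probability measure on ℝ with finite first moment. Then H(μ|ρ) ≥ (∫ z dμ(z))² / (2 ∫ z² dμ(z)), with equality if and only if μ = ρ; here the right-hand side is interpreted as 0 when the second moment of μ is infinite, and H(μ|ρ) = +∞ when μ is not absolutely continuous with respect to ρ. -/

import Mathlib

open MeasureTheory Classical Real


lemma sub_one_lt_mul_log' {x : ℝ} (hx : 0 ≤ x) (hne : x ≠ 1) :
    x - 1 < x * Real.log x := by
  rcases hx.eq_or_lt with h | h
  · rw [← h]; norm_num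
  · have h1 : Real.log x⁻¹ < x⁻¹ - 1 :=
      Real.log_lt_sub_one_of_pos (inv_pos.2 h) (fun hh => hne (by rwa [inv_eq_one] at hh))
    rw [Real.log_inv] at h1
    have := mul_lt_mul_of_pos_left h1 h
    rw [mul_sub, mul_inv_cancel₀ h.ne'] at this
    nlinarith

lemma sub_one_le_mul_log' {x : ℝ} (hx : 0 ≤ x) : x - 1 ≤ x * Real.log x := by
  by_cases hne : x = 1
  · simp [hne]
  · exact (sub_one_lt_mul_log' hx hne).le

lemma eq_one_of_mul_log_eq' {x : ℝ} (hx : 0 ≤ x) (h : x * Real.log x - (x - 1) = 0) :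
    x = 1 := by
  by_contra hne
  have := sub_one_lt_mul_log' hx hne
  linarith

lemma cosh_lt_exp_half_sq' {x : ℝ} (hx : x ≠ 0) :
    Real.cosh x < Real.exp (x ^ 2 / 2) := by
  have hdouble : Real.cosh x = 2 * Real.cosh (x / 2) ^ 2 - 1 := by
    have h1 : Real.cosh (2 * (x / 2)) = Real.cosh (x / 2) ^ 2 + Real.sinh (x / 2) ^ 2 :=
      Real.cosh_two_mul _
    have h2 : Real.cosh (x / 2) ^ 2 = Real.sinh (x / 2) ^ 2 + 1 := Real.cosh_sq _
    have h3 : (2 : ℝ) * (x / 2) = x := by ring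
    rw [h3] at h1
    linarith
  set t := Real.exp (x ^ 2 / 8) with ht
  have ht1 : 1 < t := by
    rw [ht]
    have hpos : 0 < x ^ 2 / 8 := by positivity
    calc (1 : ℝ) = Real.exp 0 := by simp
    _ < Real.exp (x ^ 2 / 8) := Real.exp_lt_exp.2 hpos
  have hc : Real.cosh (x / 2) ≤ t := by
    have := Real.cosh_le_exp_half_sq (x / 2)
    have heq : (x / 2) ^ 2 / 2 = x ^ 2 / 8 := by ring
    rwa [heq] at this
  have hcpos : (0 : ℝ) < Real.cosh (x / 2) := Real.cosh_pos _
  have hsq : Real.cosh (x / 2) ^ 2 ≤ t ^ 2 := by nlinarith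
  have hexp : Real.exp (x ^ 2 / 2) = t ^ 4 := by
    rw [ht, ← Real.exp_nat_mul]
    norm_num
    ring
  rw [hdouble, hexp]
  nlinarith [sq_nonneg (t ^ 2 - 1), sq_nonneg (t - 1)]

lemma eq_dirac_of_compl' (ρ : Measure ℝ) [IsProbabilityMeasure ρ]
    (h : ρ {(0 : ℝ)}ᶜ = 0) : ρ = Measure.dirac 0 := by
  have h0 : ρ {(0 : ℝ)} = 1 := (prob_compl_eq_zero_iff (measurableSet_singleton 0)).1 h
  ext s hs
  rw [Measure.dirac_apply' _ hs]
  by_cases h0s : (0 : ℝ) ∈ s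
  · have hle : ρ {(0 : ℝ)} ≤ ρ s := measure_mono (Set.singleton_subset_iff.2 h0s)
    have : ρ s = 1 := le_antisymm prob_le_one (h0 ▸ hle)
    simp [this, Set.indicator_of_mem h0s]
  · have hsub : s ⊆ {(0 : ℝ)}ᶜ := fun x hx => by
      simp only [Set.mem_compl_iff, Set.mem_singleton_iff]
      rintro rfl; exact h0s hx
    have : ρ s = 0 := le_antisymm (h ▸ measure_mono hsub) zero_le
    simp [this, Set.indicator_of_notMem h0s]

lemma integral_comp_neg' {ρ : Measure ℝ} (hsym : ρ.map (fun z => -z) = ρ)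
    {h : ℝ → ℝ} (hm : AEStronglyMeasurable h ρ) :
    ∫ z, h (-z) ∂ρ = ∫ z, h z ∂ρ := by
  nth_rewrite 2 [← hsym]
  rw [integral_map measurable_neg.aemeasurable (by rwa [hsym])]

lemma integral_id_symm' {ρ : Measure ℝ} (hsym : ρ.map (fun z => -z) = ρ) :
    ∫ z, z ∂ρ = 0 := by
  have := integral_comp_neg' hsym (h := fun z => z) aestronglyMeasurable_id
  rw [integral_neg] at this
  linarith

lemma gibbs' {μ ν : Measure ℝ} [IsProbabilityMeasure μ] [IsProbabilityMeasure ν]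
    (hac : μ ≪ ν)
    (hint : Integrable
      (fun z => (μ.rnDeriv ν z).toReal * Real.log (μ.rnDeriv ν z).toReal) ν) :
    0 ≤ ∫ z, (μ.rnDeriv ν z).toReal * Real.log (μ.rnDeriv ν z).toReal ∂ν ∧
      ((∫ z, (μ.rnDeriv ν z).toReal * Real.log (μ.rnDeriv ν z).toReal ∂ν) = 0 → μ = ν) := by
  set f : ℝ → ℝ := fun z => (μ.rnDeriv ν z).toReal with hf
  have hf_int : Integrable f ν := Measure.integrable_toReal_rnDeriv
  have hf_one : ∫ z, f z ∂ν = 1 := by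
    rw [hf, Measure.integral_toReal_rnDeriv hac]; simp
  have h_sub_int : Integrable (fun z => f z - 1) ν := hf_int.sub (integrable_const 1)
  have hφ_int : Integrable (fun z => f z * Real.log (f z) - (f z - 1)) ν :=
    hint.sub h_sub_int
  have hφ_nonneg : (0 : ℝ → ℝ) ≤ fun z => f z * Real.log (f z) - (f z - 1) := fun z =>
    sub_nonneg.2 (sub_one_le_mul_log' ENNReal.toReal_nonneg)
  have hφ_eq : ∫ z, (f z * Real.log (f z) - (f z - 1)) ∂ν
      = ∫ z, f z * Real.log (f z) ∂ν := by
    rw [integral_sub hint h_sub_int, integral_sub hf_int (integrable_const 1), hf_one]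
    simp [hf]
  constructor
  · rw [← hφ_eq]
    exact integral_nonneg hφ_nonneg
  · intro hH
    have h0 : ∫ z, (f z * Real.log (f z) - (f z - 1)) ∂ν = 0 := by rw [hφ_eq, hH]
    have hae : (fun z => f z * Real.log (f z) - (f z - 1)) =ᵐ[ν] 0 :=
      (integral_eq_zero_iff_of_nonneg hφ_nonneg hφ_int).1 h0
    have hone : μ.rnDeriv ν =ᵐ[ν] 1 := by
      filter_upwards [hae] with z hz
      have : f z = 1 := eq_one_of_mul_log_eq' ENNReal.toReal_nonneg hz
      simp only [Pi.one_apply]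
      exact (ENNReal.toReal_eq_one_iff _).1 this
    have := Measure.withDensity_rnDeriv_eq μ ν hac
    rw [withDensity_congr_ae hone, withDensity_one] at this
    exact this.symm

lemma exp_tilt_integrable' (ρ : Measure ℝ) [IsProbabilityMeasure ρ] (l : ℝ) :
    Integrable (fun z => Real.exp (l * z - l ^ 2 * z ^ 2 / 2)) ρ := by
  apply Integrable.mono' (integrable_const (Real.exp (1 / 2)))
  · exact Continuous.aestronglyMeasurable (by fun_prop)
  · refine Filter.Eventually.of_forall fun z => ?_
    rw [Real.norm_eq_abs, abs_of_pos (Real.exp_pos _)]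
    apply Real.exp_le_exp.2
    nlinarith [sq_nonneg (l * z - 1)]

lemma exp_tilt_lt_one' {ρ : Measure ℝ} [IsProbabilityMeasure ρ]
    (hsym : ρ.map (fun z => -z) = ρ) (hρ : ρ ≠ Measure.dirac 0)
    {l : ℝ} (hl : l ≠ 0) :
    ∫ z, Real.exp (l * z - l ^ 2 * z ^ 2 / 2) ∂ρ < 1 := by
  set g : ℝ → ℝ := fun z => Real.exp (l * z - l ^ 2 * z ^ 2 / 2) with hg
  have hg_int : Integrable g ρ := exp_tilt_integrable' ρ l
  have hg'_int : Integrable (fun z => g (-z)) ρ := by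
    have heq : (fun z => g (-z)) = fun z => Real.exp ((-l) * z - (-l) ^ 2 * z ^ 2 / 2) := by
      funext z; rw [hg]; ring_nf
    rw [heq]; exact exp_tilt_integrable' ρ (-l)
  have hsymm_eq : ∫ z, g (-z) ∂ρ = ∫ z, g z ∂ρ := integral_comp_neg' hsym hg_int.1
  have hkey : ∀ z : ℝ, g z + g (-z)
      = 2 * Real.cosh (l * z) / Real.exp ((l * z) ^ 2 / 2) := by
    intro z
    rw [hg]
    simp only []
    rw [Real.cosh_eq]
    rw [show l * z - l ^ 2 * z ^ 2 / 2 = l * z - (l * z) ^ 2 / 2 by ring,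
      show l * -z - l ^ 2 * (-z) ^ 2 / 2 = -(l * z) - (l * z) ^ 2 / 2 by ring,
      Real.exp_sub, Real.exp_sub]
    ring
  have hpt : ∀ z : ℝ, g z + g (-z) ≤ 2 := by
    intro z
    rw [hkey z, div_le_iff₀ (Real.exp_pos _)]
    have := Real.cosh_le_exp_half_sq (l * z)
    nlinarith
  have heq_zero : ∀ z : ℝ, g z + g (-z) = 2 → z = 0 := by
    intro z hz
    by_contra hz0
    have hlz : l * z ≠ 0 := mul_ne_zero hl hz0
    have hstrict := cosh_lt_exp_half_sq' hlz
    rw [hkey z, div_eq_iff (Real.exp_pos _).ne'] at hz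
    nlinarith [Real.exp_pos ((l * z) ^ 2 / 2)]
  have hsum_eq : ∫ z, (g z + g (-z)) ∂ρ = 2 * ∫ z, g z ∂ρ := by
    rw [integral_add hg_int hg'_int, hsymm_eq]; ring
  have hle : ∫ z, g z ∂ρ ≤ 1 := by
    have h2 : ∫ z, (g z + g (-z)) ∂ρ ≤ 2 := by
      calc ∫ z, (g z + g (-z)) ∂ρ ≤ ∫ _z, (2 : ℝ) ∂ρ :=
            integral_mono (hg_int.add hg'_int) (integrable_const 2) hpt
      _ = 2 := by simp
    linarith [hsum_eq ▸ h2]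
  rcases hle.lt_or_eq with h | h
  · exact h
  · exfalso
    have hu_nonneg : (0 : ℝ → ℝ) ≤ fun z => 2 - (g z + g (-z)) := fun z => by
      simpa using hpt z
    have hu_int : Integrable (fun z => 2 - (g z + g (-z))) ρ :=
      (integrable_const 2).sub (hg_int.add hg'_int)
    have hu_zero : ∫ z, (2 - (g z + g (-z))) ∂ρ = 0 := by
      have hs : ∫ z, (2 - (g z + g (-z))) ∂ρ
          = (∫ _z, (2 : ℝ) ∂ρ) - ∫ z, (g z + g (-z)) ∂ρ :=
        integral_sub (integrable_const 2) (hg_int.add hg'_int)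
      rw [hs, hsum_eq, h]
      simp
    have hae : (fun z => 2 - (g z + g (-z))) =ᵐ[ρ] 0 :=
      (integral_eq_zero_iff_of_nonneg hu_nonneg hu_int).1 hu_zero
    have hae0 : ∀ᵐ z ∂ρ, z = 0 := by
      filter_upwards [hae] with z hz
      exact heq_zero z (by simpa using (sub_eq_zero.1 (by simpa using hz)).symm)
    have hcompl : ρ {(0 : ℝ)}ᶜ = 0 := by
      have := ae_iff.1 hae0
      simpa [Set.compl_singleton_eq] using this
    exact hρ (eq_dirac_of_compl' ρ hcompl)

lemma strict_dv' {ρ μ : Measure ℝ} [IsProbabilityMeasure ρ] [IsProbabilityMeasure μ]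
    (hsym : ρ.map (fun z => -z) = ρ) (hρ : ρ ≠ Measure.dirac 0)
    (hac : μ ≪ ρ)
    (hint : Integrable
      (fun z => (μ.rnDeriv ρ z).toReal * Real.log (μ.rnDeriv ρ z).toReal) ρ)
    (hm1 : Integrable (fun z => z) μ) (hm2 : Integrable (fun z => z ^ 2) μ)
    (hm : ∫ z, z ∂μ ≠ 0) :
    (∫ z, z ∂μ) ^ 2 / (2 * ∫ z, z ^ 2 ∂μ)
      < ∫ z, (μ.rnDeriv ρ z).toReal * Real.log (μ.rnDeriv ρ z).toReal ∂ρ := by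
  set m := ∫ z, z ∂μ with hm_def
  set s := ∫ z, z ^ 2 ∂μ with hs_def
  -- s > 0
  have hs_nonneg : 0 ≤ s := integral_nonneg fun z => sq_nonneg z
  have hs_pos : 0 < s := by
    rcases hs_nonneg.lt_or_eq with h | h
    · exact h
    · exfalso
      have hz2 : (fun z => z ^ 2) =ᵐ[μ] 0 :=
        (integral_eq_zero_iff_of_nonneg (fun z => sq_nonneg z) hm2).1 h.symm
      have hz : (fun z : ℝ => z) =ᵐ[μ] 0 := by
        filter_upwards [hz2] with z hz
        simpa using pow_eq_zero_iff (n := 2) (by norm_num) |>.1 (by simpa using hz)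
      exact hm (by rw [hm_def, integral_congr_ae hz]; simp)
  set l := m / s with hl_def
  have hl : l ≠ 0 := div_ne_zero hm hs_pos.ne'
  set g : ℝ → ℝ := fun z => l * z - l ^ 2 * z ^ 2 / 2 with hg_def
  -- integrability of g w.r.t. μ
  have hgμ : Integrable g μ := by
    have heq : g = fun z => l * z - (l ^ 2 / 2) * z ^ 2 := by funext z; ring
    rw [heq]
    exact (hm1.const_mul l).sub (hm2.const_mul (l ^ 2 / 2))
  -- integrability of exp g w.r.t. ρ
  have hexp : Integrable (fun z => Real.exp (g z)) ρ := exp_tilt_integrable' ρ l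
  -- llr integrability
  have hllr_int : Integrable (MeasureTheory.llr μ ρ) μ := by
    apply (integrable_rnDeriv_smul_iff hac).mp
    simpa [MeasureTheory.llr, smul_eq_mul] using hint
  have hH_eq : ∫ z, (μ.rnDeriv ρ z).toReal * Real.log (μ.rnDeriv ρ z).toReal ∂ρ
      = ∫ z, MeasureTheory.llr μ ρ z ∂μ := by
    rw [← integral_rnDeriv_smul hac (f := MeasureTheory.llr μ ρ)]
    simp [MeasureTheory.llr, smul_eq_mul]
  -- the tilted measure
  set ν := ρ.tilted g with hν_def
  haveI : IsProbabilityMeasure ν := isProbabilityMeasure_tilted hexp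
  have hacν : μ ≪ ν := hac.trans (absolutelyContinuous_tilted hexp)
  have h_int_ν : Integrable (MeasureTheory.llr μ ν) μ :=
    integrable_llr_tilted_right hac hgμ hllr_int hexp
  have hkey : ∫ z, MeasureTheory.llr μ ν z ∂μ
      = ∫ z, MeasureTheory.llr μ ρ z ∂μ - ∫ z, g z ∂μ
        + Real.log (∫ z, Real.exp (g z) ∂ρ) :=
    integral_llr_tilted_right hac hgμ hexp hllr_int
  -- Gibbs for (μ, ν)
  have hint_ν : Integrable
      (fun z => (μ.rnDeriv ν z).toReal * Real.log (μ.rnDeriv ν z).toReal) ν := by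
    have := (integrable_rnDeriv_smul_iff hacν (f := MeasureTheory.llr μ ν)).mpr h_int_ν
    simpa [MeasureTheory.llr, smul_eq_mul] using this
  have hgibbs := (gibbs' hacν hint_ν).1
  have hHν_eq : ∫ z, (μ.rnDeriv ν z).toReal * Real.log (μ.rnDeriv ν z).toReal ∂ν
      = ∫ z, MeasureTheory.llr μ ν z ∂μ := by
    rw [← integral_rnDeriv_smul hacν (f := MeasureTheory.llr μ ν)]
    simp [MeasureTheory.llr, smul_eq_mul]
  have hν_nonneg : 0 ≤ ∫ z, MeasureTheory.llr μ ν z ∂μ := hHν_eq ▸ hgibbs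
  -- compute ∫ g dμ
  have hg_int_eq : ∫ z, g z ∂μ = m ^ 2 / (2 * s) := by
    have heq : g = fun z => l * z - (l ^ 2 / 2) * z ^ 2 := by funext z; ring
    have heq2 : ∫ z, g z ∂μ = l * m - (l ^ 2 / 2) * s := by
      rw [heq, integral_sub (hm1.const_mul l) (hm2.const_mul (l ^ 2 / 2)),
        integral_const_mul, integral_const_mul]
    rw [heq2, hl_def]
    field_simp
    ring
  -- log of the tilt integral is negative
  have hc_pos : 0 < ∫ z, Real.exp (g z) ∂ρ := integral_exp_pos hexp
  have hc_lt : ∫ z, Real.exp (g z) ∂ρ < 1 := exp_tilt_lt_one' hsym hρ hl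
  have hlog_neg : Real.log (∫ z, Real.exp (g z) ∂ρ) < 0 := Real.log_neg hc_pos hc_lt
  rw [hH_eq]
  have := hkey ▸ hν_nonneg
  rw [hg_int_eq] at this
  linarith

lemma relEntropy_self_aux (ρ : Measure ℝ) [IsProbabilityMeasure ρ] :
    (ρ ≪ ρ ∧ Integrable
      (fun z => (ρ.rnDeriv ρ z).toReal * Real.log (ρ.rnDeriv ρ z).toReal) ρ)
    ∧ ∫ z, (ρ.rnDeriv ρ z).toReal * Real.log (ρ.rnDeriv ρ z).toReal ∂ρ = 0 := by
  have hone := Measure.rnDeriv_self ρ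
  have hzero : (fun z => (ρ.rnDeriv ρ z).toReal * Real.log (ρ.rnDeriv ρ z).toReal)
      =ᵐ[ρ] 0 := by
    filter_upwards [hone] with z hz
    simp [hz]
  exact ⟨⟨Measure.AbsolutelyContinuous.rfl,
      (integrable_congr hzero).mpr (integrable_zero _ _ _)⟩,
    by rw [integral_congr_ae hzero]; simp⟩


/-- The relative entropy (Kullback–Leibler divergence) of `μ` with respect to `ρ`,
as an extended real number: `∫ f log f dρ` if `μ ≪ ρ` with `f = dμ/dρ` and this
integral makes sense, and `+∞` otherwise. -/
noncomputable def relEntropy (μ ρ : MeasureTheory.Measure ℝ) : EReal :=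
  if μ ≪ ρ ∧ Integrable
      (fun z => (μ.rnDeriv ρ z).toReal * Real.log (μ.rnDeriv ρ z).toReal) ρ then
    ((∫ z, (μ.rnDeriv ρ z).toReal * Real.log (μ.rnDeriv ρ z).toReal ∂ρ : ℝ) : EReal)
  else ⊤

theorem main_inequality
    (ρ μ : Measure ℝ) [IsProbabilityMeasure ρ] [IsProbabilityMeasure μ]
    (hsym : ρ.map (fun z => -z) = ρ)
    (hρ : ρ ≠ Measure.dirac 0) (hμ : μ ≠ Measure.dirac 0)
    (hm1 : Integrable (fun z => z) μ) :
    (((∫ z, z ∂μ) ^ 2 / (2 * ∫ z, z ^ 2 ∂μ) : ℝ) : EReal) ≤ relEntropy μ ρ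
      ∧ (relEntropy μ ρ = (((∫ z, z ∂μ) ^ 2 / (2 * ∫ z, z ^ 2 ∂μ) : ℝ) : EReal)
          ↔ μ = ρ) := by
  by_cases hcase : μ ≪ ρ ∧ Integrable
      (fun z => (μ.rnDeriv ρ z).toReal * Real.log (μ.rnDeriv ρ z).toReal) ρ
  · -- finite entropy case
    have hrel : relEntropy μ ρ
        = ((∫ z, (μ.rnDeriv ρ z).toReal * Real.log (μ.rnDeriv ρ z).toReal ∂ρ : ℝ) : EReal) := by
      rw [relEntropy, if_pos hcase]
    set H := ∫ z, (μ.rnDeriv ρ z).toReal * Real.log (μ.rnDeriv ρ z).toReal ∂ρ with hH_def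
    have hgibbs := gibbs' hcase.1 hcase.2
    have hμρ_m : μ = ρ → ∫ z, z ∂μ = 0 := fun h => by
      rw [h]; exact integral_id_symm' hsym
    by_cases hm : ∫ z, z ∂μ = 0
    · have hR : (∫ z, z ∂μ) ^ 2 / (2 * ∫ z, z ^ 2 ∂μ) = 0 := by rw [hm]; simp
      rw [hrel, hR]
      constructor
      · exact_mod_cast hgibbs.1
      · constructor
        · intro h
          exact hgibbs.2 (by exact_mod_cast h)
        · intro h
          have := (relEntropy_self_aux ρ).2
          rw [hH_def]
          rw [h]
          exact_mod_cast this
    · -- m ≠ 0 : μ = ρ is impossible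
      have hne : μ ≠ ρ := fun h => hm (hμρ_m h)
      by_cases hm2 : Integrable (fun z => z ^ 2) μ
      · have hstrict := strict_dv' hsym hρ hcase.1 hcase.2 hm1 hm2 hm
        rw [hrel]
        refine ⟨by exact_mod_cast hstrict.le, ?_⟩
        constructor
        · intro h
          exact absurd (by exact_mod_cast h : H = _) hstrict.ne'
        · intro h; exact absurd h hne
      · have hs0 : ∫ z, z ^ 2 ∂μ = 0 := integral_undef hm2
        have hR : (∫ z, z ∂μ) ^ 2 / (2 * ∫ z, z ^ 2 ∂μ) = 0 := by rw [hs0]; simp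
        rw [hrel, hR]
        constructor
        · exact_mod_cast hgibbs.1
        · constructor
          · intro h
            exact absurd (hgibbs.2 (by exact_mod_cast h)) hne
          · intro h; exact absurd h hne
  · -- infinite entropy case
    have htop : relEntropy μ ρ = ⊤ := by rw [relEntropy, if_neg hcase]
    rw [htop]
    refine ⟨le_top, ?_⟩
    constructor
    · intro h
      exact absurd h.symm (EReal.coe_ne_top _)
    · intro h
      exfalso
      apply hcase
      rw [h]
      exact (relEntropy_self_aux ρ).1
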